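/- For positive integers n and m, sum_{k=0}^n (a;q)_k (b;q)_k (q^m;q)_{n-k} / ((q;q)_k (q;q)_{n-k}) * (-ab)^{n-k} q^{binom(n,2)-binom(k,2)} = (a;q)_{n+m} * sum_{k=0}^n (-b)^k q^{binom(k,2)} / ((q;q)_k (q;q)_{n-k} (a q^{n-k};q)_m). (Generalized Carlitz identity) -/

import Mathlib

open Finset

/-- The q-Pochhammer symbol `(a; q)_n = ∏_{j=0}^{n-1} (1 - a q^j)`. -/
noncomputable def qPoch (a q : ℂ) (n : ℕ) : ℂ := ∏ j ∈ Finset.range n, (1 - a * q ^ j)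

noncomputable def gauss (q : ℂ) : ℕ → ℕ → ℂ
  | _, 0 => 1
  | 0, _+1 => 0
  | n+1, k+1 => gauss q n (k+1) + q ^ (n-k) * gauss q n k

lemma qPoch_zero (a q : ℂ) : qPoch a q 0 = 1 := by simp [qPoch]

lemma qPoch_succ (a q : ℂ) (n : ℕ) : qPoch a q (n+1) = qPoch a q n * (1 - a * q ^ n) := by
  simp [qPoch, Finset.prod_range_succ]

lemma qPoch_add (a q : ℂ) (s t : ℕ) : qPoch a q (s + t) = qPoch a q s * qPoch (a * q ^ s) q t := by
  induction t with
  | zero => simp [qPoch]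
  | succ t ih =>
    rw [← Nat.add_assoc, qPoch_succ, ih, qPoch_succ, pow_add]; ring

lemma gauss_zero_right (q : ℂ) (n : ℕ) : gauss q n 0 = 1 := by cases n <;> rfl

lemma gauss_succ_succ (q : ℂ) (n k : ℕ) :
    gauss q (n+1) (k+1) = gauss q n (k+1) + q ^ (n-k) * gauss q n k := rfl

lemma gauss_eq_zero (q : ℂ) {n k : ℕ} (h : n < k) : gauss q n k = 0 := by
  induction n generalizing k with
  | zero => cases k with
    | zero => omega
    | succ k => rfl
  | succ n ih => cases k with
    | zero => omega
    | succ k =>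
      rw [gauss_succ_succ, ih (by omega), ih (by omega)]; ring

lemma gauss_self (q : ℂ) (n : ℕ) : gauss q n n = 1 := by
  induction n with
  | zero => rfl
  | succ n ih => rw [gauss_succ_succ, gauss_eq_zero q (by omega), ih]; simp

lemma gauss_mul (q : ℂ) {n k : ℕ} (h : k ≤ n) :
    gauss q n k * (qPoch q q k * qPoch q q (n-k)) = qPoch q q n := by
  induction n generalizing k with
  | zero =>
    interval_cases k; simp [qPoch, gauss_zero_right]
  | succ n ih => cases k with
    | zero => simp [gauss_zero_right, qPoch_zero]
    | succ k =>
      rcases Nat.lt_or_ge k n with hk | hk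
      · obtain ⟨d, rfl⟩ : ∃ d, n = k + 1 + d := ⟨n - (k+1), by omega⟩
        have h1 := ih (k := k+1) (by omega)
        have h2 := ih (k := k) (by omega)
        have e1 : k + 1 + d - (k + 1) = d := by omega
        have e2 : k + 1 + d - k = d + 1 := by omega
        have e3 : k + 1 + d + 1 - (k + 1) = d + 1 := by omega
        rw [e1] at h1
        rw [e2, qPoch_succ q q d] at h2
        rw [gauss_succ_succ, e2, e3, qPoch_succ q q d, qPoch_succ q q (k+1+d),
          qPoch_succ q q k] at *
        linear_combination (1 - q*q^d) * h1 + q^(d+1) * (1 - q*q^k) * h2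
      · have : k = n := by omega
        subst this
        rw [gauss_succ_succ, gauss_eq_zero q (by omega), gauss_self]
        simp [qPoch_zero]

lemma choose_succ_two (i : ℕ) : (i+1).choose 2 = i.choose 2 + i := by
  have h : (i+1).choose 2 = i.choose 1 + i.choose 2 := rfl
  rw [h, Nat.choose_one_right]; omega

lemma qbinom_thm (b q : ℂ) (n : ℕ) :
    qPoch b q n = ∑ j ∈ range (n+1), gauss q n j * (-b)^j * q^(j.choose 2) := by
  induction n with
  | zero => simp [qPoch, gauss_zero_right]
  | succ n ih =>
    have hsplit := Finset.sum_range_succ' (fun j => gauss q (n+1) j * (-b)^j * q^(j.choose 2)) (n+1)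
    rw [qPoch_succ, ih, hsplit]
    have hterm : ∀ i ∈ range (n+1),
        gauss q (n+1) (i+1) * (-b)^(i+1) * q^((i+1).choose 2)
          = gauss q n (i+1) * (-b)^(i+1) * q^((i+1).choose 2)
            + (-(b * q^n)) * (gauss q n i * (-b)^i * q^(i.choose 2)) := by
      intro i hi
      rw [mem_range] at hi
      rw [gauss_succ_succ, choose_succ_two]
      have hpow : (q:ℂ) ^ (n - i) * q ^ (i.choose 2 + i) = q ^ n * q ^ (i.choose 2) := by
        rw [← pow_add, ← pow_add]
        congr 1
        have hin : i ≤ n := by omega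
        generalize i.choose 2 = c
        omega
      calc (gauss q n (i+1) + q ^ (n-i) * gauss q n i) * (-b)^(i+1) * q^(i.choose 2 + i)
          = gauss q n (i+1) * (-b)^(i+1) * q^(i.choose 2 + i)
            + gauss q n i * (-b)^(i+1) * (q ^ (n-i) * q^(i.choose 2 + i)) := by ring
        _ = _ := by rw [hpow]; ring
    rw [Finset.sum_congr rfl hterm, Finset.sum_add_distrib]
    have h2 : (∑ i ∈ range (n+1), gauss q n (i+1) * (-b)^(i+1) * q^((i+1).choose 2))
        + gauss q n 0 * (-b)^0 * q^((0:ℕ).choose 2)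
        = ∑ j ∈ range (n+1), gauss q n j * (-b)^j * q^(j.choose 2) := by
      have e := Finset.sum_range_succ' (fun j => gauss q n j * (-b)^j * q^(j.choose 2)) (n+1)
      rw [Finset.sum_range_succ _ (n+1), gauss_eq_zero q (by omega : n < n+1)] at e
      simpa using e.symm
    rw [← Finset.mul_sum]
    simp only [gauss_zero_right, pow_zero, mul_one, one_mul, Nat.choose_zero_succ,
      Nat.choose_succ_succ, Nat.choose_zero_right, zero_add] at h2 ⊢
    linear_combination -h2

lemma qvandermonde (x y q : ℂ) (r : ℕ) :
    ∑ l ∈ range (r+1), gauss q r l * qPoch x q l * qPoch y q (r-l) * y^l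
      = qPoch (x*y) q r := by
  induction r with
  | zero => simp [qPoch, gauss_zero_right]
  | succ r ih =>
    have hsplit := Finset.sum_range_succ'
      (fun l => gauss q (r+1) l * qPoch x q l * qPoch y q (r+1-l) * y^l) (r+1)
    rw [hsplit, qPoch_succ]
    have hterm : ∀ i ∈ range (r+1),
        gauss q (r+1) (i+1) * qPoch x q (i+1) * qPoch y q (r+1-(i+1)) * y^(i+1)
          = gauss q r (i+1) * qPoch x q (i+1) * qPoch y q (r+1-(i+1)) * y^(i+1)
            + (gauss q r i * qPoch x q i * qPoch y q (r-i) * y^i)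
                * (y * q^(r-i) * (1 - x*q^i)) := by
      intro i hi
      rw [mem_range] at hi
      have e : r+1-(i+1) = r-i := by omega
      rw [e, gauss_succ_succ, qPoch_succ x q i]
      ring
    rw [Finset.sum_congr rfl hterm, Finset.sum_add_distrib]
    have h2 : (∑ i ∈ range (r+1),
          gauss q r (i+1) * qPoch x q (i+1) * qPoch y q (r+1-(i+1)) * y^(i+1))
        + gauss q r 0 * qPoch x q 0 * qPoch y q (r+1-0) * y^0
        = ∑ l ∈ range (r+1), gauss q r l * qPoch x q l * qPoch y q (r+1-l) * y^l := by
      have e := Finset.sum_range_succ'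
        (fun l => gauss q r l * qPoch x q l * qPoch y q (r+1-l) * y^l) (r+1)
      rw [Finset.sum_range_succ _ (r+1), gauss_eq_zero q (by omega : r < r+1)] at e
      simpa using e.symm
    have hterm2 : ∀ l ∈ range (r+1),
        gauss q r l * qPoch x q l * qPoch y q (r+1-l) * y^l
          + (gauss q r l * qPoch x q l * qPoch y q (r-l) * y^l) * (y * q^(r-l) * (1 - x*q^l))
          = (1 - x*y*q^r) * (gauss q r l * qPoch x q l * qPoch y q (r-l) * y^l) := by
      intro l hl
      rw [mem_range] at hl
      have e : r+1-l = (r-l)+1 := by omega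
      have hpow : (q:ℂ)^(r-l) * q^l = q^r := by
        rw [← pow_add]; congr 1; omega
      rw [e, qPoch_succ]
      linear_combination (-(gauss q r l * qPoch x q l * qPoch y q (r-l) * y^l * x * y)) * hpow
    have h4 := Finset.sum_congr rfl hterm2
    rw [Finset.sum_add_distrib, ← Finset.mul_sum, ih] at h4
    have hg0 : gauss q (r+1) 0 * qPoch x q 0 * qPoch y q (r+1-0) * y^0
        = gauss q r 0 * qPoch x q 0 * qPoch y q (r+1-0) * y^0 := by
      rw [gauss_zero_right, gauss_zero_right]
    rw [hg0]
    linear_combination h2 + h4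
lemma choose_two_add (a b : ℕ) : (a+b).choose 2 = a.choose 2 + b.choose 2 + a*b := by
  induction b with
  | zero => simp
  | succ b ih =>
    rw [← Nat.add_assoc, choose_succ_two, ih, choose_succ_two, Nat.mul_succ]
    omega

/-- The generalized Carlitz identity. -/
theorem generalized_carlitz (n m : ℕ) (hn : 1 ≤ n) (hm : 1 ≤ m) (a b q : ℂ)
    (hq : ‖q‖ < 1) (ha : ∀ j ≤ n + m - 1, a * q ^ j ≠ 1) :
    ∑ k ∈ range (n + 1),
        qPoch a q k * qPoch b q k * qPoch (q ^ m) q (n - k)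
          / (qPoch q q k * qPoch q q (n - k))
          * (-(a * b)) ^ (n - k) * q ^ (n.choose 2 - k.choose 2)
      = qPoch a q (n + m) *
          ∑ k ∈ range (n + 1),
            (-b) ^ k * q ^ (k.choose 2)
              / (qPoch q q k * qPoch q q (n - k) * qPoch (a * q ^ (n - k)) q m) := by
  -- nonvanishing facts
  have hqne : ∀ j : ℕ, qPoch q q j ≠ 0 := by
    intro j
    refine Finset.prod_ne_zero_iff.mpr fun i _ => ?_
    intro h
    have h1 : q * q ^ i = 1 := by linear_combination -h
    have := congrArg (‖·‖) h1
    simp only [norm_mul, norm_pow, norm_one] at this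
    nlinarith [pow_le_one₀ (norm_nonneg q) hq.le (n := i), norm_nonneg q,
      pow_nonneg (norm_nonneg q) i]
  have hane : ∀ t ≤ n, qPoch (a * q ^ t) q m ≠ 0 := by
    intro t ht
    refine Finset.prod_ne_zero_iff.mpr fun i hi => ?_
    rw [mem_range] at hi
    intro h
    have h1 : a * q ^ (t + i) = 1 := by
      rw [pow_add]; linear_combination -h
    exact ha (t+i) (by omega) h1
  -- the middle form
  set F : ℕ → ℂ := fun r => (-b)^r * q^(r.choose 2) * qPoch a q (n-r)
      * qPoch (a*q^(n-r+m)) q r / (qPoch q q r * qPoch q q (n-r)) with hF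
  have hRHS : qPoch a q (n + m) *
          ∑ k ∈ range (n + 1),
            (-b) ^ k * q ^ (k.choose 2)
              / (qPoch q q k * qPoch q q (n - k) * qPoch (a * q ^ (n - k)) q m)
        = ∑ r ∈ range (n+1), F r := by
    rw [Finset.mul_sum]
    refine Finset.sum_congr rfl fun r hr => ?_
    rw [mem_range] at hr
    obtain ⟨t, rfl⟩ : ∃ t, n = r + t := ⟨n - r, by omega⟩
    have e1 : r + t - r = t := by omega
    have e2 : r + t + m = t + (m + r) := by omega
    rw [hF, e1, e2, qPoch_add a q t (m+r), qPoch_add (a*q^t) q m r]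
    have e3 : a * q ^ t * q ^ m = a * q ^ (t+m) := by rw [pow_add]; ring
    rw [e3]
    field_simp [hqne, hane t (by omega)]
    rw [e1]
    ring
  rw [hRHS]
  set T : ℕ → ℕ → ℂ := fun k j =>
    qPoch a q k * (gauss q k j * (-b)^j * q^(j.choose 2)) * qPoch (q ^ m) q (n - k)
      / (qPoch q q k * qPoch q q (n - k))
      * (-(a * b)) ^ (n - k) * q ^ (n.choose 2 - k.choose 2) with hT
  have hL1 : ∀ k ∈ range (n+1),
      qPoch a q k * qPoch b q k * qPoch (q ^ m) q (n - k)
          / (qPoch q q k * qPoch q q (n - k))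
          * (-(a * b)) ^ (n - k) * q ^ (n.choose 2 - k.choose 2)
        = ∑ j ∈ range (k+1), T k j := by
    intro k _
    rw [qbinom_thm b q k, hT]
    simp only [Finset.mul_sum, Finset.sum_mul, Finset.sum_div]
  rw [Finset.sum_congr rfl hL1]
  have hswap : ∑ k ∈ range (n+1), ∑ j ∈ range (k+1), T k j
      = ∑ r ∈ range (n+1), ∑ l ∈ range (r+1), T (n-l) (r-l) := by
    rw [Finset.sum_sigma', Finset.sum_sigma']
    refine Finset.sum_nbij' (i := fun p => ⟨p.2 + (n - p.1), n - p.1⟩)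
      (j := fun p => ⟨n - p.2, p.1 - p.2⟩) ?_ ?_ ?_ ?_ ?_
    · rintro ⟨k, j⟩ hp
      simp only [Finset.mem_sigma, mem_range] at hp ⊢
      omega
    · rintro ⟨r, l⟩ hp
      simp only [Finset.mem_sigma, mem_range] at hp ⊢
      omega
    · rintro ⟨k, j⟩ hp
      simp only [Finset.mem_sigma, mem_range] at hp
      obtain ⟨e1, e2⟩ : n - (n - k) = k ∧ j + (n-k) - (n-k) = j := ⟨by omega, by omega⟩
      simp only [e1, e2]
    · rintro ⟨r, l⟩ hp
      simp only [Finset.mem_sigma, mem_range] at hp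
      obtain ⟨e1, e2, e3⟩ : r - l + (n - (n - l)) = r ∧ n - (n - l) = l ∧ r - l + l = r :=
        ⟨by omega, by omega, by omega⟩
      simp only [e1, e2, e3]
    · rintro ⟨k, j⟩ hp
      simp only [Finset.mem_sigma, mem_range] at hp
      obtain ⟨e1, e2⟩ : n - (n - k) = k ∧ j + (n-k) - (n-k) = j := ⟨by omega, by omega⟩
      simp only [e1, e2]
  rw [hswap]
  refine Finset.sum_congr rfl fun r hr => ?_
  rw [mem_range] at hr
  obtain ⟨t, rfl⟩ : ∃ t, n = r + t := ⟨n - r, by omega⟩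
  have hterm : ∀ l ∈ range (r+1), T (r+t-l) (r-l)
      = ((-b)^r * q^(r.choose 2) * qPoch a q t / (qPoch q q r * qPoch q q t))
        * (gauss q r l * qPoch (q^m) q l * qPoch (a*q^t) q (r-l) * (a*q^t)^l) := by
    intro l hl
    rw [mem_range] at hl
    obtain ⟨s, rfl⟩ : ∃ s, r = l + s := ⟨r - l, by omega⟩
    have e1 : l + s + t - l = s + t := by omega
    have e2 : l + s - l = s := by omega
    have e3 : l + s + t - (s + t) = l := by omega
    rw [e1, e2, hT]
    simp only [e3]
    have g1 : gauss q (s+t) s = qPoch q q (s+t) / (qPoch q q s * qPoch q q t) := by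
      rw [eq_div_iff (mul_ne_zero (hqne s) (hqne t))]
      have := gauss_mul q (n := s+t) (k := s) (by omega)
      rw [show s + t - s = t from by omega] at this
      exact this
    have g2 : gauss q (l+s) l = qPoch q q (l+s) / (qPoch q q l * qPoch q q s) := by
      rw [eq_div_iff (mul_ne_zero (hqne l) (hqne s))]
      have := gauss_mul q (n := l+s) (k := l) (by omega)
      rw [show l + s - l = s from by omega] at this
      exact this
    have hA : qPoch a q (s+t) = qPoch a q t * qPoch (a*q^t) q s := by
      rw [show s + t = t + s from by omega, qPoch_add]
    have hq2 : (q:ℂ)^(s.choose 2) * q^((l+s+t).choose 2 - (s+t).choose 2)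
        = q^((l+s).choose 2) * q^(t*l) := by
      rw [← pow_add, ← pow_add]
      congr 1
      have c1 := choose_two_add l (s+t)
      have c2 := choose_two_add l s
      have c3 : l * (s+t) = l*s + l*t := by ring
      have c4 : l + (s+t) = l + s + t := by omega
      rw [c4] at c1
      have c5 : t * l = l * t := by ring
      generalize (l+s+t).choose 2 = A at *
      generalize (s+t).choose 2 = B at *
      generalize (l+s).choose 2 = C at *
      generalize l.choose 2 = D at *
      generalize s.choose 2 = E at *
      generalize l*s = X at *
      generalize l*t = Y at *
      generalize l*(s+t) = Z at *
      generalize t*l = W at *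
      omega
    have hsign : (-(a*b))^l = a^l * (-b)^l := by
      rw [show -(a*b) = a * -b from by ring, mul_pow]
    have hpow3 : (a*q^t)^l = a^l * q^(t*l) := by
      rw [mul_pow, ← pow_mul]
    calc qPoch a q (s+t) * (gauss q (s+t) s * (-b)^s * q^(s.choose 2)) * qPoch (q^m) q l
          / (qPoch q q (s+t) * qPoch q q l)
          * (-(a*b))^l * q^((l+s+t).choose 2 - (s+t).choose 2)
        = (q^(s.choose 2) * q^((l+s+t).choose 2 - (s+t).choose 2))
            * (qPoch a q (s+t) * gauss q (s+t) s * (-b)^s * qPoch (q^m) q l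
                / (qPoch q q (s+t) * qPoch q q l) * (-(a*b))^l) := by ring
      _ = (q^((l+s).choose 2) * q^(t*l))
            * (qPoch a q (s+t) * gauss q (s+t) s * (-b)^s * qPoch (q^m) q l
                / (qPoch q q (s+t) * qPoch q q l) * (-(a*b))^l) := by rw [hq2]
      _ = _ := by
          rw [g1, g2, hA, hsign, hpow3]
          have h1 := hqne s; have h2 := hqne t; have h3 := hqne l
          have h4 := hqne (s+t); have h5 := hqne (l+s)
          field_simp
          ring
  rw [Finset.sum_congr rfl hterm, ← Finset.mul_sum, qvandermonde (q^m) (a*q^t) q r, hF]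
  have e1 : r + t - r = t := by omega
  have e2 : q^m * (a*q^t) = a * q^(t+m) := by rw [pow_add]; ring
  have e3 : r + t - r + m = t + m := by omega
  show _ = (-b) ^ r * q ^ r.choose 2 * qPoch a q (r + t - r) * qPoch (a * q ^ (r + t - r + m)) q r
      / (qPoch q q r * qPoch q q (r + t - r))
  rw [e1, e2]
  ring
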